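/- (Convergence of silhouettes to the first landscape) Let (b₁,d₁),…,(b_N,d_N) be pairs with bⱼ < dⱼ, and suppose there is a unique index j* maximizing dⱼ − bⱼ. Then as q → ∞, the silhouette φ^{(q)}(t) = Σⱼ (dⱼ−bⱼ)^q Λⱼ(t) / Σⱼ (dⱼ−bⱼ)^q converges pointwise to Λ_{j*}(t) for every t ∈ ℝ. -/

import Mathlib

open Filter

noncomputable def tent (b d t : ℝ) : ℝ := max 0 (min (t - b) (d - t))

theorem stmt_19 (N : ℕ) (b d : Fin N → ℝ) (hbd : ∀ j, b j < d j)
    (jstar : Fin N) (hstar : ∀ j, j ≠ jstar → d j - b j < d jstar - b jstar) :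
    ∀ t : ℝ,
      Tendsto
        (fun q : ℝ => (∑ j, (d j - b j) ^ q * tent (b j) (d j) t) / ∑ j, (d j - b j) ^ q)
        atTop (nhds (tent (b jstar) (d jstar) t)) := by
  intro t
  set D : ℝ := d jstar - b jstar with hDdef
  have hD : 0 < D := sub_pos.2 (hbd jstar)
  have hpos : ∀ j, 0 < d j - b j := fun j => sub_pos.2 (hbd j)
  -- rewrite the function as a ratio of normalized sums
  have key : ∀ q : ℝ,
      (∑ j, (d j - b j) ^ q * tent (b j) (d j) t) / ∑ j, (d j - b j) ^ q
        = (∑ j, ((d j - b j) / D) ^ q * tent (b j) (d j) t) /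
          ∑ j, ((d j - b j) / D) ^ q := by
    intro q
    have hDq : (0:ℝ) < D ^ q := Real.rpow_pos_of_pos hD q
    simp only [Real.div_rpow (le_of_lt (hpos _)) (le_of_lt hD), div_mul_eq_mul_div]
    rw [← Finset.sum_div, ← Finset.sum_div, div_div_div_cancel_right₀ (ne_of_gt hDq)]
  simp only [key]
  -- limits of normalized sums
  have hnum : Tendsto (fun q : ℝ => ∑ j, ((d j - b j) / D) ^ q * tent (b j) (d j) t)
      atTop (nhds (tent (b jstar) (d jstar) t)) := by
    have := tendsto_finset_sum (Finset.univ : Finset (Fin N))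
      (x := atTop) (f := fun j (q : ℝ) => ((d j - b j) / D) ^ q * tent (b j) (d j) t)
      (a := fun j => if j = jstar then tent (b jstar) (d jstar) t else 0)
      (fun j _ => by
        by_cases hj : j = jstar
        · subst hj
          simp only [if_pos rfl, ↓reduceIte, div_self (ne_of_gt hD), Real.one_rpow, one_mul]
          rw [hDdef, div_self (ne_of_gt (hpos _))]
          simp
        · simp only [if_neg hj]
          have hr0 : (0:ℝ) < (d j - b j) / D := div_pos (hpos j) hD
          have hr1 : (d j - b j) / D < 1 := (div_lt_one hD).2 (hstar j hj)
          have h0 : Tendsto (fun q : ℝ => ((d j - b j) / D) ^ q) atTop (nhds 0) :=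
            tendsto_rpow_atTop_of_base_lt_one _ (by linarith) hr1
          simpa using h0.mul_const (tent (b j) (d j) t))
    simpa [Finset.sum_ite_eq'] using this
  have hden : Tendsto (fun q : ℝ => ∑ j, ((d j - b j) / D) ^ q)
      atTop (nhds 1) := by
    have := tendsto_finset_sum (Finset.univ : Finset (Fin N))
      (x := atTop) (f := fun j (q : ℝ) => ((d j - b j) / D) ^ q)
      (a := fun j => if j = jstar then 1 else 0)
      (fun j _ => by
        by_cases hj : j = jstar
        · subst hj
          simp only [if_pos rfl, ↓reduceIte, div_self (ne_of_gt hD), Real.one_rpow]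
          rw [hDdef, div_self (ne_of_gt (hpos _))]
          simp
        · simp only [if_neg hj]
          have hr0 : (0:ℝ) < (d j - b j) / D := div_pos (hpos j) hD
          have hr1 : (d j - b j) / D < 1 := (div_lt_one hD).2 (hstar j hj)
          exact tendsto_rpow_atTop_of_base_lt_one _ (by linarith) hr1)
    simpa [Finset.sum_ite_eq'] using this
  simpa [Pi.div_def] using hnum.div hden one_ne_zero
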